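/- Let F be an algebraically closed field, Γ an additive abelian group, and V = ⊕_{λ∈Γ} V_λ a Γ-graded F-vector space. Let T : V → V be a linear operator which is homogeneous of degree α ≠ 0 (i.e. T(V_μ) ⊆ V_{α+μ} for all μ), locally finite, and such that for every c ∈ F the eigenspace {v ∈ V : Tv = cv} is a Γ-graded subspace of V (spanned by its homogeneous elements). Then T is locally nilpotent. -/

import Mathlib

/-- Over an algebraically closed field, a locally finite linear operator
`T` on a `Γ`-graded vector space `V` which is homogeneous of nonzero degree `α` and
whose eigenspaces are all `Γ`-graded subspaces is locally nilpotent. -/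
theorem locallyNilpotent_of_nonzero_degree
    {F : Type*} [Field F] [IsAlgClosed F] {Γ : Type*} [AddCommGroup Γ] [DecidableEq Γ]
    {V : Type*} [AddCommGroup V] [Module F V]
    (𝒱 : Γ → Submodule F V) [DirectSum.Decomposition 𝒱]
    (T : Module.End F V) (α : Γ) (hα : α ≠ 0)
    (hdeg : ∀ μ : Γ, ∀ v ∈ 𝒱 μ, T v ∈ 𝒱 (α + μ))
    (hlf : ∀ v : V, FiniteDimensional F
      (Submodule.span F (Set.range fun m : ℕ => (T ^ m) v)))
    (heig : ∀ (c : F) (v : V), T v = c • v → ∀ γ : Γ,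
      T (DirectSum.decompose 𝒱 v γ : V) = c • (DirectSum.decompose 𝒱 v γ : V)) :
    ∀ v : V, ∃ n : ℕ, (T ^ n) v = 0 := by
  classical
  -- Step 1: every eigenvalue of `T` is zero.
  have key : ∀ (c : F) (w : V), T w = c • w → w ≠ 0 → c = 0 := by
    intro c w hw hw0
    by_contra hc
    obtain ⟨γ, hγ⟩ : ∃ γ : Γ, (DirectSum.decompose 𝒱 w γ : V) ≠ 0 := by
      by_contra h
      push_neg at h
      apply hw0
      have hs := DirectSum.sum_support_decompose 𝒱 w
      rw [← hs]
      exact Finset.sum_eq_zero fun γ _ => h γ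
    set u : V := (DirectSum.decompose 𝒱 w γ : V) with hu
    have humem : u ∈ 𝒱 γ := (DirectSum.decompose 𝒱 w γ).2
    have hTu : T u = c • u := heig c w hw γ
    have h1 : c • u ∈ 𝒱 (α + γ) := hTu ▸ hdeg γ u humem
    have h2 : c • u ∈ 𝒱 γ := Submodule.smul_mem _ _ humem
    have hne : α + γ ≠ γ := fun h => hα (by
      have := congrArg (· + (-γ)) h
      simpa [add_assoc] using this)
    have hz : (DirectSum.decompose 𝒱 (c • u) γ : V) = 0 :=
      DirectSum.decompose_of_mem_ne 𝒱 h1 hne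
    have hsame : (DirectSum.decompose 𝒱 (c • u) γ : V) = c • u :=
      DirectSum.decompose_of_mem_same 𝒱 h2
    have : c • u = 0 := by rw [← hsame, hz]
    rcases smul_eq_zero.mp this with h | h
    · exact hc h
    · exact hγ h
  intro v
  set W : Submodule F V := Submodule.span F (Set.range fun m : ℕ => (T ^ m) v) with hW
  have hWinv : ∀ x ∈ W, T x ∈ W := by
    intro x hx
    have : W ≤ W.comap T := by
      rw [hW, Submodule.span_le]
      rintro _ ⟨m, rfl⟩
      refine Submodule.mem_comap.mpr (Submodule.subset_span ⟨m + 1, ?_⟩)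
      simp [pow_succ', Module.End.mul_apply]
    exact this hx
  have hvW : v ∈ W := Submodule.subset_span ⟨0, by simp⟩
  haveI : FiniteDimensional F W := hlf v
  set φ : Module.End F W := T.restrict hWinv with hφ
  -- every root of the minimal polynomial of φ is zero
  have hroots : ∀ μ ∈ (minpoly F φ).roots, μ = 0 := by
    intro μ hμ
    have hroot : (minpoly F φ).IsRoot μ := Polynomial.isRoot_of_mem_roots hμ
    have hev : φ.HasEigenvalue μ := Module.End.hasEigenvalue_iff_isRoot.mpr hroot
    obtain ⟨w, hw⟩ := hev.exists_hasEigenvector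
    have hTw : T (w : V) = μ • (w : V) := by
      have := hw.apply_eq_smul
      have := congrArg (Subtype.val) this
      simpa [hφ, LinearMap.restrict_apply] using this
    exact key μ w hTw (fun h => hw.2 (Subtype.ext h))
  have hmon : (minpoly F φ).Monic := minpoly.monic (LinearMap.isIntegral φ)
  have hspl := IsAlgClosed.splits (minpoly F φ)
  have haev := minpoly.aeval F φ
  have hprod := hspl.eq_prod_roots_of_monic hmon
  set n := Multiset.card (minpoly F φ).roots with hn
  have hrep : (minpoly F φ).roots = Multiset.replicate n 0 :=
    Multiset.eq_replicate.mpr ⟨rfl, fun b hb => hroots b hb⟩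
  have hXpow : minpoly F φ = Polynomial.X ^ n := by
    rw [hprod, hrep]
    simp [Multiset.map_replicate, Multiset.prod_replicate]
  have hφn : φ ^ n = 0 := by
    have := minpoly.aeval F φ
    rwa [hXpow, map_pow, Polynomial.aeval_X] at this
  refine ⟨n, ?_⟩
  have hres : (T ^ n).restrict (Module.End.pow_apply_mem_of_forall_mem n hWinv) = 0 := by
    rw [← Module.End.pow_restrict n hWinv]
    exact hφn
  have h0 : ((T ^ n).restrict (Module.End.pow_apply_mem_of_forall_mem n hWinv)) ⟨v, hvW⟩ = 0 := by
    rw [hres]; rfl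
  have := congrArg Subtype.val h0
  simpa [LinearMap.restrict_apply] using this
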